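/- Let n ≥ 1 and let λ_1 ≥ λ_2 ≥ … ≥ λ_n ≥ 0 be integers. Then the type A_n Gelfand–Tsetlin polytope GT_{A_n}(λ) is a lattice polytope: every vertex (extreme point) of GT_{A_n}(λ) has all coordinates in ℤ. -/

import Mathlib

/-- Index set for type `Aₙ` Gelfand–Tsetlin patterns: pairs `(i, j)` with `1 ≤ i ≤ j ≤ n`. -/
abbrev GTAIdx (n : ℕ) := {p : ℕ × ℕ // 1 ≤ p.1 ∧ p.1 ≤ p.2 ∧ p.2 ≤ n}

/-- The `(i, j)` coordinate of a point `y : ℝ^{n(n+1)/2}` (and `0` for out-of-range indices). -/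
def gtaC (n : ℕ) (y : GTAIdx n → ℝ) (i j : ℕ) : ℝ :=
  if h : 1 ≤ i ∧ i ≤ j ∧ j ≤ n then y ⟨(i, j), h⟩ else 0

/-- The type `Aₙ` Gelfand–Tsetlin polytope of `λ` (with the convention `λ_{n+1} = 0`
encoded by the value `lam (n+1)`). -/
def GTA (n : ℕ) (lam : ℕ → ℝ) : Set (GTAIdx n → ℝ) :=
  {y | (∀ j, 1 ≤ j → j ≤ n → lam j ≥ gtaC n y 1 j ∧ gtaC n y 1 j ≥ lam (j + 1)) ∧
       (∀ i j, 2 ≤ i → i ≤ j → j ≤ n →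
          gtaC n y (i - 1) (j - 1) ≥ gtaC n y i j ∧ gtaC n y i j ≥ gtaC n y (i - 1) j)}

noncomputable instance gtaIdxFintype (n : ℕ) : Fintype (GTAIdx n) :=
  Fintype.ofInjective
    (fun p => ((⟨p.1.1, by have := p.2; omega⟩ : Fin (n+1)),
               (⟨p.1.2, by have := p.2; omega⟩ : Fin (n+1))))
    (by
      rintro ⟨⟨a, b⟩, hp⟩ ⟨⟨a', b'⟩, hq⟩ h
      simp only [Prod.mk.injEq, Fin.mk.injEq] at h
      simp [h.1, h.2])

/-- For an integral dominant weight, the type `Aₙ` Gelfand–Tsetlin polytope is a lattice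
polytope: every vertex has all coordinates in `ℤ`. -/
theorem statement5 (n : ℕ) (hn : 1 ≤ n) (lam : ℕ → ℝ)
    (hmono : ∀ j, 1 ≤ j → j + 1 ≤ n → lam (j + 1) ≤ lam j)
    (hpos : 0 ≤ lam n) (hzero : lam (n + 1) = 0)
    (hint : ∀ j, 1 ≤ j → j ≤ n → ∃ k : ℤ, lam j = k) :
    ∀ y ∈ (GTA n lam).extremePoints ℝ, ∀ p : GTAIdx n, ∃ k : ℤ, y p = k := by
  classical
  intro y hy
  rw [mem_extremePoints] at hy
  obtain ⟨hyG, hext⟩ := hy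
  by_contra hcon
  push_neg at hcon
  obtain ⟨p₀, hp₀⟩ := hcon
  set c := y p₀ with hc
  set d : GTAIdx n → ℝ := fun p => if y p = c then 1 else 0 with hd
  have hd01 : ∀ p, d p = 0 ∨ d p = 1 := by
    intro p; simp only [hd]; split <;> simp
  have hdeq : ∀ p q : GTAIdx n, y p = y q → d p = d q := by
    intro p q h; simp only [hd, h]
  have hdp₀ : d p₀ = 1 := by simp [hd, hc]
  set S₀ : Finset ℝ := (Finset.univ.image y) ∪ ((Finset.range (n+2)).image lam) with hS₀
  have hyS : ∀ p : GTAIdx n, y p ∈ S₀ := fun p =>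
    Finset.mem_union_left _ (Finset.mem_image_of_mem y (Finset.mem_univ p))
  have hlamS : ∀ j, j ≤ n + 1 → lam j ∈ S₀ := fun j hj =>
    Finset.mem_union_right _ (Finset.mem_image_of_mem lam (Finset.mem_range.mpr (by omega)))
  have hcne : ∀ j, 1 ≤ j → j ≤ n + 1 → c ≠ lam j := by
    intro j h1 h2 h
    rcases Nat.lt_or_ge j (n+1) with hj | hj
    · obtain ⟨k, hk⟩ := hint j h1 (by omega)
      exact hp₀ k (h.trans hk)
    · have hje : j = n + 1 := by omega
      subst hje
      exact hp₀ 0 (by rw [h, hzero]; simp)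
  set P : Finset (ℝ × ℝ) := (S₀ ×ˢ S₀).filter (fun q => q.1 < q.2) with hP
  have hPne : P.Nonempty := by
    rcases lt_or_gt_of_ne (hcne 1 le_rfl (by omega)) with h | h
    · exact ⟨(c, lam 1), Finset.mem_filter.mpr
        ⟨Finset.mem_product.mpr ⟨hyS p₀, hlamS 1 (by omega)⟩, h⟩⟩
    · exact ⟨(lam 1, c), Finset.mem_filter.mpr
        ⟨Finset.mem_product.mpr ⟨hlamS 1 (by omega), hyS p₀⟩, h⟩⟩
  set ε : ℝ := (P.inf' hPne (fun q => q.2 - q.1)) / 2 with hε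
  have hεpos : 0 < ε := by
    have h : 0 < P.inf' hPne (fun q => q.2 - q.1) := by
      rw [Finset.lt_inf'_iff]
      intro q hq
      have := (Finset.mem_filter.mp hq).2
      linarith
    simp only [hε]; linarith
  have hgap : ∀ u ∈ S₀, ∀ v ∈ S₀, u < v → 2*ε ≤ v - u := by
    intro u hu v hv huv
    have hmem : (u, v) ∈ P := Finset.mem_filter.mpr ⟨Finset.mem_product.mpr ⟨hu, hv⟩, huv⟩
    have h2 : P.inf' hPne (fun q : ℝ × ℝ => q.2 - q.1) ≤ v - u := Finset.inf'_le _ hmem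
    simp only [hε]; linarith
  have key : ∀ t : ℝ, -ε ≤ t → t ≤ ε → ∀ u v : GTAIdx n, y v ≤ y u →
      y v + t * d v ≤ y u + t * d u := by
    intro t ht1 ht2 u v huv
    by_cases h : y u = y v
    · rw [hdeq u v h, h]
    · have hlt : y v < y u := lt_of_le_of_ne huv (Ne.symm h)
      have hg := hgap _ (hyS v) _ (hyS u) hlt
      rcases hd01 u with h1 | h1 <;> rcases hd01 v with h2 | h2 <;>
        rw [h1, h2] <;> nlinarith
  have hmem : ∀ t : ℝ, -ε ≤ t → t ≤ ε → (y + t • d) ∈ GTA n lam := by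
    intro t ht1 ht2
    constructor
    · intro j hj1 hjn
      have hidx : 1 ≤ 1 ∧ 1 ≤ j ∧ j ≤ n := ⟨le_rfl, hj1, hjn⟩
      have e1 : gtaC n (y + t • d) 1 j = y ⟨(1, j), hidx⟩ + t * d ⟨(1, j), hidx⟩ := by
        simp [gtaC, hidx]
      have e2 : gtaC n y 1 j = y ⟨(1, j), hidx⟩ := by
        simp [gtaC, hidx]
      obtain ⟨hu, hl⟩ := hyG.1 j hj1 hjn
      rw [e2] at hu hl
      rw [e1]
      by_cases hcp : y ⟨(1, j), hidx⟩ = c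
      · have hd1 : d ⟨(1, j), hidx⟩ = 1 := by simp [hd, hcp]
        have hne1 : y ⟨(1, j), hidx⟩ ≠ lam j := by rw [hcp]; exact hcne j hj1 (by omega)
        have hne2 : y ⟨(1, j), hidx⟩ ≠ lam (j+1) := by
          rw [hcp]; exact hcne (j+1) (by omega) (by omega)
        have hlt1 : y ⟨(1, j), hidx⟩ < lam j := lt_of_le_of_ne hu hne1
        have hlt2 : lam (j+1) < y ⟨(1, j), hidx⟩ := lt_of_le_of_ne hl (Ne.symm hne2)
        have hg1 := hgap _ (hyS ⟨(1, j), hidx⟩) _ (hlamS j (by omega)) hlt1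
        have hg2 := hgap _ (hlamS (j+1) (by omega)) _ (hyS ⟨(1, j), hidx⟩) hlt2
        rw [hd1]
        constructor <;> [linarith; linarith]
      · have hd0 : d ⟨(1, j), hidx⟩ = 0 := by simp [hd, hcp]
        rw [hd0]
        constructor <;> [linarith; linarith]
    · intro i j hi2 hij hjn
      have ha : 1 ≤ i - 1 ∧ i - 1 ≤ j - 1 ∧ j - 1 ≤ n := by omega
      have hb : 1 ≤ i ∧ i ≤ j ∧ j ≤ n := by omega
      have he : 1 ≤ i - 1 ∧ i - 1 ≤ j ∧ j ≤ n := by omega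
      have ea : gtaC n (y + t • d) (i-1) (j-1)
          = y ⟨(i-1, j-1), ha⟩ + t * d ⟨(i-1, j-1), ha⟩ := by simp [gtaC, ha]
      have eb : gtaC n (y + t • d) i j = y ⟨(i, j), hb⟩ + t * d ⟨(i, j), hb⟩ := by
        simp [gtaC, hb]
      have ee : gtaC n (y + t • d) (i-1) j
          = y ⟨(i-1, j), he⟩ + t * d ⟨(i-1, j), he⟩ := by simp [gtaC, he]
      have ea' : gtaC n y (i-1) (j-1) = y ⟨(i-1, j-1), ha⟩ := by simp [gtaC, ha]
      have eb' : gtaC n y i j = y ⟨(i, j), hb⟩ := by simp [gtaC, hb]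
      have ee' : gtaC n y (i-1) j = y ⟨(i-1, j), he⟩ := by simp [gtaC, he]
      obtain ⟨h1, h2⟩ := hyG.2 i j hi2 hij hjn
      rw [ea', eb'] at h1
      rw [eb', ee'] at h2
      rw [ea, eb, ee]
      exact ⟨key t ht1 ht2 _ _ h1, key t ht1 ht2 _ _ h2⟩
  have hz1 := hmem (-ε) (by linarith) (by linarith)
  have hz2 := hmem ε (by linarith) le_rfl
  have hseg : y ∈ openSegment ℝ (y + (-ε) • d) (y + ε • d) := by
    refine ⟨1/2, 1/2, by norm_num, by norm_num, by norm_num, ?_⟩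
    funext p
    simp only [Pi.add_apply, Pi.smul_apply, smul_eq_mul]
    ring
  have hfix := (hext _ hz1 _ hz2 hseg).1
  have h0 : (y + (-ε) • d) p₀ = y p₀ := by rw [hfix]
  simp only [Pi.add_apply, Pi.smul_apply, smul_eq_mul, hdp₀, mul_one] at h0
  linarith
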